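/- Let k be a field and X a linearly ordered set. In the free metabelian Lie algebra L₍₂₎(X), the family consisting of the images of the generators x ∈ X together with the images of all regular R-words [a₀,a₁,...,aₙ] (n ≥ 1, aᵢ ∈ X, a₀ > a₁ ≤ a₂ ≤ ⋯ ≤ aₙ) is a k-linear basis of L₍₂₎(X). -/

import Mathlib

/-- The free metabelian Lie algebra on `X` over `k`. -/
abbrev FreeMetabelianLieAlgebra (k : Type u) [Field k] (X : Type v) :=
  FreeLieAlgebra k X ⧸ LieAlgebra.derivedSeries k (FreeLieAlgebra k X) 2

/-- The image of a generator `x ∈ X` in the free metabelian Lie algebra. -/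
noncomputable def FreeMetabelianLieAlgebra.of (k : Type u) [Field k] {X : Type v} (x : X) :
    FreeMetabelianLieAlgebra k X :=
  LieSubmodule.Quotient.mk (N := LieAlgebra.derivedSeries k (FreeLieAlgebra k X) 2)
    (FreeLieAlgebra.of k x)

/-- A regular `R`-word on a linearly ordered set `X`: data `a₀, a₁, …, aₙ` with `n ≥ 1`
and `a₀ > a₁ ≤ a₂ ≤ ⋯ ≤ aₙ`. -/
structure RWord (X : Type v) [LinearOrder X] where
  a₀ : X
  a₁ : X
  rest : List X
  lt : a₁ < a₀
  sorted : (a₁ :: rest).Pairwise (· ≤ ·)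

/-- The image in the free metabelian Lie algebra of a regular `R`-word, i.e. the
left-normed bracket `[a₀, a₁, …, aₙ]` of the images of its letters. -/
noncomputable def RWord.toLie (k : Type u) [Field k] {X : Type v} [LinearOrder X]
    (w : RWord X) : FreeMetabelianLieAlgebra k X :=
  ((w.a₁ :: w.rest).map (FreeMetabelianLieAlgebra.of k)).foldl (fun u v => ⁅u, v⁆)
    (FreeMetabelianLieAlgebra.of k w.a₀)

namespace FMB
universe u' v'
variable (k : Type u') [Field k] (X : Type v')

/-! ### A metabelian model Lie algebra -/

def Mdl := (X →₀ k) × (X →₀ MvPolynomial X k)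

noncomputable instance : AddCommGroup (Mdl k X) :=
  inferInstanceAs (AddCommGroup ((X →₀ k) × (X →₀ MvPolynomial X k)))
noncomputable instance : Module k (Mdl k X) :=
  inferInstanceAs (Module k ((X →₀ k) × (X →₀ MvPolynomial X k)))

variable {k X}

@[simp] lemma Mdl.add_fst (u v : Mdl k X) : (u + v).1 = u.1 + v.1 := rfl
@[simp] lemma Mdl.add_snd (u v : Mdl k X) : (u + v).2 = u.2 + v.2 := rfl
@[simp] lemma Mdl.smul_fst (r : k) (u : Mdl k X) : (r • u).1 = r • u.1 := rfl
@[simp] lemma Mdl.smul_snd (r : k) (u : Mdl k X) : (r • u).2 = r • u.2 := rfl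
@[simp] lemma Mdl.zero_fst : ((0 : Mdl k X)).1 = 0 := rfl
@[simp] lemma Mdl.zero_snd : ((0 : Mdl k X)).2 = 0 := rfl

variable (k X)

noncomputable def Lmap : Mdl k X →ₗ[k] MvPolynomial X k :=
  (Finsupp.linearCombination k fun x => (MvPolynomial.X x : MvPolynomial X k)) ∘ₗ
    LinearMap.fst k (X →₀ k) (X →₀ MvPolynomial X k)

noncomputable def Emap : Mdl k X →ₗ[k] (X →₀ MvPolynomial X k) :=
  (Finsupp.mapRange.linearMap (Algebra.linearMap k (MvPolynomial X k))) ∘ₗ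
      LinearMap.fst k (X →₀ k) (X →₀ MvPolynomial X k)
    + LinearMap.snd k (X →₀ k) (X →₀ MvPolynomial X k)

variable {k X}

lemma Lmap_apply (u : Mdl k X) :
    Lmap k X u
      = (Finsupp.linearCombination k fun x => (MvPolynomial.X x : MvPolynomial X k)) u.1 :=
  rfl

lemma Emap_apply (u : Mdl k X) :
    Emap k X u = Finsupp.mapRange (algebraMap k (MvPolynomial X k)) (map_zero _) u.1 + u.2 := by
  rfl

variable (k X) in
/-- Inclusion of the second component. -/
noncomputable def pr (ω : X →₀ MvPolynomial X k) : Mdl k X := (0, ω)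

@[simp] lemma pr_fst (ω : X →₀ MvPolynomial X k) : (pr k X ω).1 = 0 := rfl
@[simp] lemma pr_snd (ω : X →₀ MvPolynomial X k) : (pr k X ω).2 = ω := rfl

lemma pr_smul (c : k) (ω : X →₀ MvPolynomial X k) : pr k X (c • ω) = c • pr k X ω := by
  refine Prod.ext ?_ rfl
  show (0 : X →₀ k) = c • 0
  rw [smul_zero]

noncomputable def br (u v : Mdl k X) : Mdl k X :=
  pr k X (Lmap k X u • Emap k X v - Lmap k X v • Emap k X u)

lemma br_fst (u v : Mdl k X) : (br u v).1 = 0 := rfl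
lemma br_snd (u v : Mdl k X) :
    (br u v).2 = Lmap k X u • Emap k X v - Lmap k X v • Emap k X u := rfl

lemma Lmap_pair (c : X →₀ MvPolynomial X k) : Lmap k X (pr k X c) = 0 := by
  rw [Lmap_apply]; exact map_zero _

lemma Emap_pair (c : X →₀ MvPolynomial X k) : Emap k X (pr k X c) = c := by
  rw [Emap_apply]
  show Finsupp.mapRange _ _ (0 : X →₀ k) + c = c
  rw [Finsupp.mapRange_zero, zero_add]

lemma Lmap_br (u v : Mdl k X) : Lmap k X (br u v) = 0 := Lmap_pair _
lemma Emap_br (u v : Mdl k X) :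
    Emap k X (br u v) = Lmap k X u • Emap k X v - Lmap k X v • Emap k X u := Emap_pair _

noncomputable instance : LieRing (Mdl k X) where
  bracket := br
  add_lie u v w := by
    refine Prod.ext (by simp [br_fst]) ?_
    simp only [br_snd, map_add, add_smul, smul_add, Mdl.add_snd]
    abel
  lie_add u v w := by
    refine Prod.ext (by simp [br_fst]) ?_
    simp only [br_snd, map_add, add_smul, smul_add, Mdl.add_snd]
    abel
  lie_self u := by
    refine Prod.ext (by simp [br_fst]) ?_
    simp [br_snd]
  leibniz_lie u v w := by
    refine Prod.ext (by simp [br_fst]) ?_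
    simp only [br_snd, Mdl.add_snd, Lmap_br, Emap_br, zero_smul, smul_sub, sub_zero,
      zero_sub, smul_smul]
    module

noncomputable instance : LieAlgebra k (Mdl k X) where
  lie_smul r u v := by
    refine Prod.ext (by show (br u (r • v)).1 = r • (br u v).1; simp [br_fst]) ?_
    show (br u (r • v)).2 = r • (br u v).2
    simp only [br_snd, map_smul, smul_sub]
    rw [smul_assoc, smul_comm ((Lmap k X) u) r]

lemma lie_def (u v : Mdl k X) : ⁅u, v⁆ = br u v := rfl

/-! ### Generators and computations in the model -/

variable (k X) in
noncomputable def gen (x : X) : Mdl k X := (Finsupp.single x 1, 0)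

lemma Lmap_gen (x : X) : Lmap k X (gen k X x) = MvPolynomial.X x := by
  rw [Lmap_apply]
  show Finsupp.linearCombination k _ (Finsupp.single x 1) = _
  rw [Finsupp.linearCombination_single, one_smul]

lemma Emap_gen (x : X) : Emap k X (gen k X x) = Finsupp.single x 1 := by
  rw [Emap_apply]
  show Finsupp.mapRange _ _ (Finsupp.single x (1:k)) + 0 = _
  rw [Finsupp.mapRange_single, add_zero, map_one]

lemma lie_pair_gen (ω : X →₀ MvPolynomial X k) (y : X) :
    ⁅pr k X ω, gen k X y⁆ = pr k X (-((MvPolynomial.X y : MvPolynomial X k) • ω)) := by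
  refine Prod.ext (br_fst _ _) ?_
  show (br _ _).2 = _
  rw [br_snd, Lmap_pair, Emap_pair, Lmap_gen, zero_smul, zero_sub, pr_snd]

lemma lie_gen_gen (x y : X) :
    ⁅gen k X x, gen k X y⁆ =
      pr k X (Finsupp.single y (MvPolynomial.X x) - Finsupp.single x (MvPolynomial.X y)) := by
  refine Prod.ext (br_fst _ _) ?_
  show (br _ _).2 = _
  rw [br_snd, Lmap_gen, Lmap_gen, Emap_gen, Emap_gen, Finsupp.smul_single, Finsupp.smul_single,
    smul_eq_mul, smul_eq_mul, mul_one, mul_one, pr_snd]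

lemma foldl_pair (l : List X) (ω : X →₀ MvPolynomial X k) :
    (l.map (gen k X)).foldl (fun u v => ⁅u, v⁆) (pr k X ω)
      = pr k X (((l.map fun b => -(MvPolynomial.X b : MvPolynomial X k)).prod) • ω) := by
  induction l generalizing ω with
  | nil => simp
  | cons b l ih =>
      simp only [List.map_cons, List.foldl_cons, List.prod_cons]
      rw [lie_pair_gen, ih, ← neg_smul, smul_smul, mul_comm]

variable (X) in
noncomputable def expv [DecidableEq X] (l : List X) : X →₀ ℕ :=
  Multiset.toFinsupp (l : Multiset X)

lemma expv_cons [DecidableEq X] (b : X) (l : List X) :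
    expv X (b :: l) = Finsupp.single b 1 + expv X l := by
  unfold expv
  rw [← Multiset.cons_coe, ← Multiset.singleton_add, Multiset.toFinsupp_add,
    Multiset.toFinsupp_singleton]

lemma prod_negX [DecidableEq X] (l : List X) :
    (l.map fun b => -(MvPolynomial.X b : MvPolynomial X k)).prod
      = algebraMap k (MvPolynomial X k) ((-1) ^ l.length)
          * MvPolynomial.monomial (expv X l) (1 : k) := by
  induction l with
  | nil =>
      simp [expv, Multiset.toFinsupp_zero]
  | cons b l ih =>
      rw [List.map_cons, List.prod_cons, ih, expv_cons, MvPolynomial.monomial_single_add,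
        pow_one, List.length_cons, pow_succ, map_mul, map_neg (algebraMap k (MvPolynomial X k)),
        map_one (algebraMap k (MvPolynomial X k))]
      ring

variable (k X) in
/-- The normal-form vector in the model attached to a regular word. -/
noncomputable def Wvec [DecidableEq X] (a₀ a₁ : X) (rest : List X) :
    X →₀ MvPolynomial X k :=
  Finsupp.single a₁ (MvPolynomial.monomial (expv X (a₀ :: rest)) 1)
    - Finsupp.single a₀ (MvPolynomial.monomial (expv X (a₁ :: rest)) 1)

lemma gen_word [DecidableEq X] (a₀ a₁ : X) (rest : List X) :
    ((a₁ :: rest).map (gen k X)).foldl (fun u v => ⁅u, v⁆) (gen k X a₀)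
      = ((-1 : k)) ^ rest.length • pr k X (Wvec k X a₀ a₁ rest) := by
  rw [List.map_cons, List.foldl_cons, lie_gen_gen, foldl_pair, prod_negX, mul_smul,
    algebraMap_smul, pr_smul]
  congr 2
  rw [smul_sub, Finsupp.smul_single, Finsupp.smul_single, smul_eq_mul, smul_eq_mul, Wvec]
  have h : ∀ a : X, MvPolynomial.monomial (expv X rest) (1:k) * MvPolynomial.X a
      = MvPolynomial.monomial (expv X (a :: rest)) 1 := by
    intro a
    rw [expv_cons, MvPolynomial.monomial_single_add, pow_one, mul_comm]
  rw [h, h]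

/-! ### The morphism from the free Lie algebra and its descent -/

variable (k X) in
noncomputable def φ : FreeLieAlgebra k X →ₗ⁅k⁆ Mdl k X :=
  FreeLieAlgebra.lift k (gen k X)

lemma φ_of (x : X) : φ k X (FreeLieAlgebra.of k x) = gen k X x :=
  FreeLieAlgebra.lift_of_apply _ _

variable (k X) in
/-- The ideal of elements with vanishing linear part. -/
noncomputable def Iω : LieIdeal k (Mdl k X) where
  carrier := {u | u.1 = 0}
  add_mem' := by
    intro a b ha hb
    show (a + b).1 = 0
    rw [Mdl.add_fst, show a.1 = 0 from ha, show b.1 = 0 from hb, add_zero]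
  zero_mem' := rfl
  smul_mem' := by
    intro c a ha
    show (c • a).1 = 0
    rw [Mdl.smul_fst, show a.1 = 0 from ha, smul_zero]
  lie_mem := by
    intro x m _
    show (br x m).1 = 0
    exact br_fst x m

lemma derived_two_bot : LieAlgebra.derivedSeries k (Mdl k X) 2 = ⊥ := by
  have h1 : LieAlgebra.derivedSeries k (Mdl k X) 1 ≤ Iω k X := by
    rw [LieAlgebra.derivedSeries_def, LieAlgebra.derivedSeriesOfIdeal_succ,
      LieAlgebra.derivedSeriesOfIdeal_zero]
    refine (LieSubmodule.lie_le_iff _ _ _).mpr ?_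
    intro x _ m _
    show (br x m).1 = 0
    exact br_fst x m
  have h2 : LieAlgebra.derivedSeries k (Mdl k X) 2 ≤ ⁅Iω k X, Iω k X⁆ := by
    rw [show (2:ℕ) = 1 + 1 from rfl, LieAlgebra.derivedSeries_def,
      LieAlgebra.derivedSeriesOfIdeal_succ]
    exact LieSubmodule.mono_lie h1 h1
  refine le_bot_iff.mp (h2.trans ?_)
  refine (LieSubmodule.lie_le_iff _ _ _).mpr ?_
  intro x hx m hm
  have hx0 : Lmap k X x = 0 := by
    rw [Lmap_apply, show x.1 = 0 from hx]; exact map_zero _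
  have hm0 : Lmap k X m = 0 := by
    rw [Lmap_apply, show m.1 = 0 from hm]; exact map_zero _
  have : ⁅x, m⁆ = 0 := by
    rw [lie_def, br, hx0, hm0, zero_smul, zero_smul, sub_zero]
    rfl
  rw [this]
  exact (LieSubmodule.mem_bot _).mpr rfl

lemma φ_derived_two {z : FreeLieAlgebra k X}
    (hz : z ∈ LieAlgebra.derivedSeries k (FreeLieAlgebra k X) 2) : φ k X z = 0 := by
  have h : φ k X z ∈ (LieAlgebra.derivedSeries k (FreeLieAlgebra k X) 2).map (φ k X) :=
    LieIdeal.mem_map hz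
  have h2 := LieIdeal.derivedSeries_map_le (f := φ k X) 2 h
  rw [derived_two_bot] at h2
  exact (LieSubmodule.mem_bot _).mp h2

variable (k X) in
noncomputable def φbar : FreeMetabelianLieAlgebra k X →ₗ[k] Mdl k X :=
  Submodule.liftQ (LieAlgebra.derivedSeries k (FreeLieAlgebra k X) 2).toSubmodule
    (φ k X).toLinearMap (by
      intro z hz
      rw [LinearMap.mem_ker]
      exact φ_derived_two hz)

lemma φbar_mk (z : FreeLieAlgebra k X) :
    φbar k X (LieSubmodule.Quotient.mk
      (N := LieAlgebra.derivedSeries k (FreeLieAlgebra k X) 2) z) = φ k X z := rfl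


/-! ### The quotient side -/

variable (k X) in
noncomputable def mkL : FreeLieAlgebra k X →ₗ⁅k⁆ FreeMetabelianLieAlgebra k X :=
  { (LieAlgebra.derivedSeries k (FreeLieAlgebra k X) 2).toSubmodule.mkQ with
    map_lie' := rfl }

lemma mkL_apply (z : FreeLieAlgebra k X) :
    mkL k X z = LieSubmodule.Quotient.mk
      (N := LieAlgebra.derivedSeries k (FreeLieAlgebra k X) 2) z := rfl

lemma mkL_surj : Function.Surjective (mkL k X) :=
  Submodule.Quotient.mk_surjective _

lemma mkL_of (x : X) : mkL k X (FreeLieAlgebra.of k x) = FreeMetabelianLieAlgebra.of k x := rfl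

lemma derivedQ_two_bot [LinearOrder X] :
    LieAlgebra.derivedSeries k (FreeMetabelianLieAlgebra k X) 2 = ⊥ := by
  rw [← LieIdeal.derivedSeries_map_eq 2 (mkL_surj (k := k) (X := X))]
  refine le_bot_iff.mp (LieIdeal.map_le_iff_le_comap.mpr ?_)
  intro z hz
  rw [LieIdeal.mem_comap, LieSubmodule.mem_bot, mkL_apply, LieSubmodule.Quotient.mk_eq_zero']
  exact hz

variable (k X) in
noncomputable abbrev D1 : LieIdeal k (FreeMetabelianLieAlgebra k X) :=
  LieAlgebra.derivedSeries k (FreeMetabelianLieAlgebra k X) 1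

lemma D1_eq : D1 k X = ⁅(⊤ : LieIdeal k (FreeMetabelianLieAlgebra k X)),
    (⊤ : LieIdeal k (FreeMetabelianLieAlgebra k X))⁆ := rfl

lemma D2_eq : LieAlgebra.derivedSeries k (FreeMetabelianLieAlgebra k X) 2
    = ⁅D1 k X, D1 k X⁆ := rfl

lemma lie_mem_D1 (p q : FreeMetabelianLieAlgebra k X) : ⁅p, q⁆ ∈ D1 k X := by
  rw [D1_eq]
  exact LieSubmodule.lie_mem_lie (LieSubmodule.mem_top p) (LieSubmodule.mem_top q)

lemma D1_lie_zero [LinearOrder X] {u v : FreeMetabelianLieAlgebra k X}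
    (hu : u ∈ D1 k X) (hv : v ∈ D1 k X) : ⁅u, v⁆ = 0 := by
  have h : ⁅u, v⁆ ∈ LieAlgebra.derivedSeries k (FreeMetabelianLieAlgebra k X) 2 := by
    rw [D2_eq]
    exact LieSubmodule.lie_mem_lie hu hv
  rw [derivedQ_two_bot] at h
  exact (LieSubmodule.mem_bot _).mp h

lemma swap_tail [LinearOrder X] {u : FreeMetabelianLieAlgebra k X} (hu : u ∈ D1 k X)
    (p q : FreeMetabelianLieAlgebra k X) : ⁅⁅u, p⁆, q⁆ = ⁅⁅u, q⁆, p⁆ := by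
  have h0 : ⁅u, ⁅p, q⁆⁆ = 0 := D1_lie_zero hu (lie_mem_D1 p q)
  have h1 := leibniz_lie u p q
  rw [h0, ← lie_skew p ⁅u, q⁆] at h1
  exact (add_neg_eq_zero.mp h1.symm)

lemma jac3 (a b c : FreeMetabelianLieAlgebra k X) :
    ⁅⁅a, b⁆, c⁆ = ⁅⁅a, c⁆, b⁆ - ⁅⁅b, c⁆, a⁆ := by
  have h := leibniz_lie a b c
  have h2 : ⁅⁅a, b⁆, c⁆ = ⁅a, ⁅b, c⁆⁆ - ⁅b, ⁅a, c⁆⁆ := eq_sub_of_add_eq h.symm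
  rw [h2, ← lie_skew a ⁅b, c⁆, ← lie_skew b ⁅a, c⁆, ← lie_skew ⁅b, c⁆ a, ← lie_skew ⁅a, c⁆ b]
  abel

lemma foldl_lie_mem_D1 (l : List (FreeMetabelianLieAlgebra k X))
    {u : FreeMetabelianLieAlgebra k X} (hu : u ∈ D1 k X) :
    l.foldl (fun a b => ⁅a, b⁆) u ∈ D1 k X := by
  induction l generalizing u with
  | nil => exact hu
  | cons b l ih => exact ih (lie_mem_D1 _ _)

lemma foldl_lie_perm [LinearOrder X] {l l' : List (FreeMetabelianLieAlgebra k X)}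
    (h : l.Perm l') : ∀ u ∈ D1 k X,
    l.foldl (fun a b => ⁅a, b⁆) u = l'.foldl (fun a b => ⁅a, b⁆) u := by
  induction h with
  | nil => intro u _; rfl
  | cons x _ ih =>
      intro u _
      simp only [List.foldl_cons]
      exact ih _ (lie_mem_D1 _ _)
  | swap x y t =>
      intro u hu
      simp only [List.foldl_cons]
      rw [swap_tail hu]
  | trans h1 h2 ih1 ih2 =>
      intro u hu
      rw [ih1 u hu, ih2 u hu]

lemma foldl_lie_sub (l : List (FreeMetabelianLieAlgebra k X)) :
    ∀ u v : FreeMetabelianLieAlgebra k X,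
      l.foldl (fun a b => ⁅a, b⁆) (u - v)
        = l.foldl (fun a b => ⁅a, b⁆) u - l.foldl (fun a b => ⁅a, b⁆) v := by
  induction l with
  | nil => intro u v; rfl
  | cons b l ih =>
      intro u v
      simp only [List.foldl_cons]
      rw [sub_lie]
      exact ih _ _


/-! ### Regular words in the quotient -/

section Words
variable [LinearOrder X]

lemma toLie_def (w : RWord X) :
    w.toLie k = (w.rest.map (FreeMetabelianLieAlgebra.of k)).foldl (fun u v => ⁅u, v⁆)
      ⁅FreeMetabelianLieAlgebra.of k w.a₀, FreeMetabelianLieAlgebra.of k w.a₁⁆ := rfl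

variable (k X) in
noncomputable def T : Submodule k (FreeMetabelianLieAlgebra k X) :=
  Submodule.span k
    (Set.range (Sum.elim (fun x : X => FreeMetabelianLieAlgebra.of k x)
      (fun w : RWord X => w.toLie k)))

lemma of_mem_T (x : X) : FreeMetabelianLieAlgebra.of k x ∈ T k X :=
  Submodule.subset_span ⟨Sum.inl x, rfl⟩

lemma toLie_mem_T (w : RWord X) : w.toLie k ∈ T k X :=
  Submodule.subset_span ⟨Sum.inr w, rfl⟩

lemma toLie_mem_D1 (w : RWord X) : w.toLie k ∈ D1 k X := by
  rw [toLie_def]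
  exact foldl_lie_mem_D1 _ (lie_mem_D1 _ _)

lemma lie_toLie_of_mem (w : RWord X) (x : X) :
    ⁅w.toLie k, FreeMetabelianLieAlgebra.of k x⁆ ∈ T k X := by
  have hu : ⁅FreeMetabelianLieAlgebra.of k w.a₀, FreeMetabelianLieAlgebra.of k w.a₁⁆
      ∈ D1 k X := lie_mem_D1 _ _
  have hsrt := List.pairwise_cons.mp w.sorted
  have hstep : ⁅w.toLie k, FreeMetabelianLieAlgebra.of k x⁆
      = ((w.rest ++ [x]).map (FreeMetabelianLieAlgebra.of k)).foldl (fun u v => ⁅u, v⁆)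
          ⁅FreeMetabelianLieAlgebra.of k w.a₀, FreeMetabelianLieAlgebra.of k w.a₁⁆ := by
    rw [List.map_append, List.foldl_append, ← toLie_def]
    rfl
  rcases le_or_gt w.a₁ x with hx | hx
  · have hperm : ((w.rest ++ [x]).map (FreeMetabelianLieAlgebra.of k)).Perm
        ((List.orderedInsert (· ≤ ·) x w.rest).map (FreeMetabelianLieAlgebra.of k)) :=
      List.Perm.map _ ((List.perm_append_singleton x w.rest).trans
        (List.perm_orderedInsert (· ≤ ·) x w.rest).symm)
    have hsorted : (w.a₁ :: List.orderedInsert (· ≤ ·) x w.rest).Pairwise (· ≤ ·) := by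
      rw [List.pairwise_cons]
      refine ⟨?_, List.Pairwise.orderedInsert x w.rest hsrt.2⟩
      intro b hb
      rcases (List.mem_orderedInsert _).mp hb with rfl | hb
      · exact hx
      · exact hsrt.1 b hb
    have hw' : ⁅w.toLie k, FreeMetabelianLieAlgebra.of k x⁆
        = (RWord.mk w.a₀ w.a₁ (List.orderedInsert (· ≤ ·) x w.rest) w.lt hsorted).toLie k := by
      rw [hstep, toLie_def]
      exact foldl_lie_perm hperm _ hu
    rw [hw']
    exact toLie_mem_T _
  · have h1 : ⁅w.toLie k, FreeMetabelianLieAlgebra.of k x⁆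
        = (w.rest.map (FreeMetabelianLieAlgebra.of k)).foldl (fun u v => ⁅u, v⁆)
            ⁅⁅FreeMetabelianLieAlgebra.of k w.a₀, FreeMetabelianLieAlgebra.of k w.a₁⁆,
              FreeMetabelianLieAlgebra.of k x⁆ := by
      rw [hstep, foldl_lie_perm
        (List.Perm.map (FreeMetabelianLieAlgebra.of k) (List.perm_append_singleton x w.rest))
        _ hu]
      rfl
    have hsorted₁ : (x :: w.a₁ :: w.rest).Pairwise (· ≤ ·) := by
      rw [List.pairwise_cons]
      refine ⟨?_, w.sorted⟩
      intro b hb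
      rcases List.mem_cons.mp hb with rfl | hb
      · exact hx.le
      · exact hx.le.trans (hsrt.1 b hb)
    have hsorted₂ : (x :: List.orderedInsert (· ≤ ·) w.a₀ w.rest).Pairwise (· ≤ ·) := by
      rw [List.pairwise_cons]
      refine ⟨?_, List.Pairwise.orderedInsert w.a₀ w.rest hsrt.2⟩
      intro b hb
      rcases (List.mem_orderedInsert _).mp hb with rfl | hb
      · exact (hx.trans w.lt).le
      · exact hx.le.trans (hsrt.1 b hb)
    have hterm2 : (w.rest.map (FreeMetabelianLieAlgebra.of k)).foldl (fun u v => ⁅u, v⁆)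
          ⁅⁅FreeMetabelianLieAlgebra.of k w.a₁, FreeMetabelianLieAlgebra.of k x⁆,
            FreeMetabelianLieAlgebra.of k w.a₀⁆
        = (RWord.mk w.a₁ x (List.orderedInsert (· ≤ ·) w.a₀ w.rest) hx hsorted₂).toLie k := by
      show ((w.a₀ :: w.rest).map (FreeMetabelianLieAlgebra.of k)).foldl (fun u v => ⁅u, v⁆)
          ⁅FreeMetabelianLieAlgebra.of k w.a₁, FreeMetabelianLieAlgebra.of k x⁆ = _
      rw [toLie_def]
      exact foldl_lie_perm
        (List.Perm.map _ (List.perm_orderedInsert (· ≤ ·) w.a₀ w.rest).symm) _ (lie_mem_D1 _ _)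
    rw [h1, jac3, foldl_lie_sub, hterm2]
    exact sub_mem
      (toLie_mem_T (RWord.mk w.a₀ x (w.a₁ :: w.rest) (hx.trans w.lt) hsorted₁))
      (toLie_mem_T _)

lemma lie_of_of_mem (x y : X) :
    ⁅FreeMetabelianLieAlgebra.of k x, FreeMetabelianLieAlgebra.of k y⁆ ∈ T k X := by
  rcases lt_trichotomy x y with h | h | h
  · have : ⁅FreeMetabelianLieAlgebra.of k x, FreeMetabelianLieAlgebra.of k y⁆
        = -(RWord.mk y x [] h (List.pairwise_singleton _ x)).toLie k := by
      rw [show (RWord.mk y x [] h (List.pairwise_singleton _ x)).toLie k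
          = ⁅FreeMetabelianLieAlgebra.of k y, FreeMetabelianLieAlgebra.of k x⁆ from rfl]
      rw [lie_skew]
    rw [this]
    exact neg_mem (toLie_mem_T _)
  · subst h
    rw [lie_self]
    exact zero_mem _
  · exact toLie_mem_T (RWord.mk x y [] h (List.pairwise_singleton _ y))

lemma lie_mem_T {u v : FreeMetabelianLieAlgebra k X} (hu : u ∈ T k X) (hv : v ∈ T k X) :
    ⁅u, v⁆ ∈ T k X := by
  induction hu using Submodule.span_induction with
  | mem u hu =>
      induction hv using Submodule.span_induction with
      | mem v hv =>
          obtain ⟨i, rfl⟩ := hu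
          obtain ⟨j, rfl⟩ := hv
          cases i with
          | inl x =>
              cases j with
              | inl y => exact lie_of_of_mem x y
              | inr w =>
                  rw [← lie_skew]
                  exact neg_mem (lie_toLie_of_mem w x)
          | inr w =>
              cases j with
              | inl y => exact lie_toLie_of_mem w y
              | inr w' =>
                  simp only [Sum.elim_inr]
                  rw [D1_lie_zero (toLie_mem_D1 w) (toLie_mem_D1 w')]
                  exact zero_mem _
      | zero => rw [lie_zero]; exact zero_mem _
      | add v₁ v₂ _ _ h1 h2 => rw [lie_add]; exact add_mem h1 h2
      | smul c v _ h => rw [lie_smul]; exact Submodule.smul_mem _ c h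
  | zero => rw [zero_lie]; exact zero_mem _
  | add u₁ u₂ _ _ h1 h2 => rw [add_lie]; exact add_mem h1 h2
  | smul c u _ h => rw [smul_lie]; exact Submodule.smul_mem _ c h

end Words

/-! ### Generation by the generators -/

lemma lieSpan_free_top :
    LieSubalgebra.lieSpan k (FreeLieAlgebra k X) (Set.range (FreeLieAlgebra.of k)) = ⊤ := by
  set S := LieSubalgebra.lieSpan k (FreeLieAlgebra k X) (Set.range (FreeLieAlgebra.of k)) with hS
  have hmem : ∀ x : X, FreeLieAlgebra.of k x ∈ S :=
    fun x => LieSubalgebra.subset_lieSpan ⟨x, rfl⟩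
  let g : FreeLieAlgebra k X →ₗ⁅k⁆ S :=
    FreeLieAlgebra.lift k fun x => ⟨FreeLieAlgebra.of k x, hmem x⟩
  have hid : S.incl.comp g = LieHom.id := by
    refine FreeLieAlgebra.hom_ext fun x => ?_
    show S.incl (g (FreeLieAlgebra.of k x)) = FreeLieAlgebra.of k x
    rw [show g (FreeLieAlgebra.of k x) = ⟨FreeLieAlgebra.of k x, hmem x⟩ from
      FreeLieAlgebra.lift_of_apply _ _]
    rfl
  rw [eq_top_iff]
  intro z _
  have hz : S.incl (g z) = z := by
    have := LieHom.congr_fun hid z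
    exact this
  rw [← hz]
  exact (g z).2

lemma T_eq_top [LinearOrder X] : T k X = ⊤ := by
  rw [eq_top_iff]
  rintro z -
  obtain ⟨y, rfl⟩ := mkL_surj (k := k) (X := X) z
  have hy : y ∈ LieSubalgebra.lieSpan k (FreeLieAlgebra k X)
      (Set.range (FreeLieAlgebra.of k)) := by
    rw [lieSpan_free_top]; trivial
  refine LieSubalgebra.lieSpan_induction (R := k) (p := fun y _ => mkL k X y ∈ T k X)
    ?_ ?_ ?_ ?_ ?_ hy
  · rintro _ ⟨x, rfl⟩
    show mkL k X (FreeLieAlgebra.of k x) ∈ T k X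
    exact of_mem_T x
  · show mkL k X 0 ∈ T k X
    rw [map_zero (mkL k X)]; exact zero_mem _
  · intro a b _ _ ha hb
    show mkL k X (a + b) ∈ T k X
    rw [map_add (mkL k X)]; exact add_mem ha hb
  · intro r x _ hx
    show mkL k X (r • x) ∈ T k X
    rw [map_smul (mkL k X)]; exact Submodule.smul_mem _ r hx
  · intro a b _ _ ha hb
    show mkL k X ⁅a, b⁆ ∈ T k X
    rw [LieHom.map_lie]
    exact lie_mem_T ha hb


/-! ### Linear independence -/

section Indep
variable [LinearOrder X]

lemma mkL_foldl (l : List (FreeLieAlgebra k X)) :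
    ∀ z, (l.map (mkL k X)).foldl (fun u v => ⁅u, v⁆) (mkL k X z)
      = mkL k X (l.foldl (fun u v => ⁅u, v⁆) z) := by
  induction l with
  | nil => intro z; rfl
  | cons b l ih =>
      intro z
      simp only [List.map_cons, List.foldl_cons]
      rw [← LieHom.map_lie]
      exact ih _

lemma toLie_eq_mkL (w : RWord X) :
    w.toLie k = mkL k X (((w.a₁ :: w.rest).map (FreeLieAlgebra.of k)).foldl
      (fun u v => ⁅u, v⁆) (FreeLieAlgebra.of k w.a₀)) := by
  rw [← mkL_foldl, List.map_map]
  rfl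

lemma φ_foldl (l : List X) :
    ∀ z, φ k X ((l.map (FreeLieAlgebra.of k)).foldl (fun u v => ⁅u, v⁆) z)
      = (l.map (gen k X)).foldl (fun u v => ⁅u, v⁆) (φ k X z) := by
  induction l with
  | nil => intro z; rfl
  | cons b l ih =>
      intro z
      simp only [List.map_cons, List.foldl_cons]
      rw [ih, LieHom.map_lie, φ_of]

lemma φbar_of (x : X) : φbar k X (FreeMetabelianLieAlgebra.of k x) = gen k X x := φ_of x

lemma φbar_toLie (w : RWord X) :
    φbar k X (w.toLie k)
      = ((-1 : k)) ^ w.rest.length • pr k X (Wvec k X w.a₀ w.a₁ w.rest) := by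
  rw [toLie_eq_mkL, mkL_apply, φbar_mk, φ_foldl, φ_of, gen_word]

variable (k X) in
noncomputable def fstAt (x : X) : Mdl k X →ₗ[k] k where
  toFun u := u.1 x
  map_add' u v := by
    show (u + v).1 x = u.1 x + v.1 x
    rw [Mdl.add_fst, Finsupp.add_apply]
  map_smul' c u := by
    show (c • u).1 x = c • u.1 x
    rw [Mdl.smul_fst, Finsupp.smul_apply]

variable (k X) in
noncomputable def coeffAt (x : X) (μ : X →₀ ℕ) : Mdl k X →ₗ[k] k where
  toFun u := MvPolynomial.coeff μ (u.2 x)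
  map_add' u v := by
    show MvPolynomial.coeff μ ((u + v).2 x) = _
    rw [Mdl.add_snd, Finsupp.add_apply, MvPolynomial.coeff_add]
  map_smul' c u := by
    show MvPolynomial.coeff μ ((c • u).2 x) = c • MvPolynomial.coeff μ (u.2 x)
    rw [Mdl.smul_snd, Finsupp.smul_apply, MvPolynomial.coeff_smul]

lemma fstAt_pr (x : X) (ω : X →₀ MvPolynomial X k) : fstAt k X x (pr k X ω) = 0 := rfl

lemma fstAt_gen (x y : X) : fstAt k X x (gen k X y) = if y = x then 1 else 0 :=
  Finsupp.single_apply

lemma coeffAt_gen (x : X) (μ : X →₀ ℕ) (y : X) : coeffAt k X x μ (gen k X y) = 0 := by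
  show MvPolynomial.coeff μ ((0 : X →₀ MvPolynomial X k) x) = 0
  rw [Finsupp.zero_apply, MvPolynomial.coeff_zero]

lemma coeffAt_pr (x : X) (μ : X →₀ ℕ) (ω : X →₀ MvPolynomial X k) :
    coeffAt k X x μ (pr k X ω) = MvPolynomial.coeff μ (ω x) := rfl

lemma multiset_of_expv_eq {l l' : List X} (h : expv X l = expv X l') :
    (l : Multiset X) = (l' : Multiset X) := by
  have h2 := congrArg Finsupp.toMultiset h
  simp only [expv] at h2
  rwa [Multiset.toFinsupp_toMultiset, Multiset.toFinsupp_toMultiset] at h2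

lemma key1 (w' w : RWord X) (h0 : w'.a₀ = w.a₀)
    (he : expv X (w'.a₁ :: w'.rest) = expv X (w.a₁ :: w.rest)) : w' = w := by
  have hperm : (w'.a₁ :: w'.rest).Perm (w.a₁ :: w.rest) :=
    Multiset.coe_eq_coe.mp (multiset_of_expv_eq he)
  have hlist := List.Perm.eq_of_pairwise' w'.sorted w.sorted hperm
  cases w'; cases w
  simp_all

lemma key2 (w' w : RWord X) (h0 : w'.a₁ = w.a₀)
    (he : expv X (w'.a₀ :: w'.rest) = expv X (w.a₁ :: w.rest)) : False := by
  have hperm : (w'.a₀ :: w'.rest).Perm (w.a₁ :: w.rest) :=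
    Multiset.coe_eq_coe.mp (multiset_of_expv_eq he)
  have hmem : w.a₁ ∈ w'.a₀ :: w'.rest := hperm.mem_iff.mpr List.mem_cons_self
  have hs := List.pairwise_cons.mp w'.sorted
  rcases List.mem_cons.mp hmem with h | h
  · have h1 : w.a₀ < w.a₁ := by
      have := w'.lt
      rw [h0, ← h] at this
      exact this
    exact lt_asymm w.lt h1
  · have h1 : w'.a₁ ≤ w.a₁ := hs.1 _ h
    rw [h0] at h1
    exact absurd h1 (not_le.mpr w.lt)

lemma coeff_Wvec_self (w : RWord X) :
    MvPolynomial.coeff (expv X (w.a₁ :: w.rest)) ((Wvec k X w.a₀ w.a₁ w.rest) w.a₀) = -1 := by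
  rw [Wvec, Finsupp.sub_apply, Finsupp.single_apply, Finsupp.single_apply,
    if_neg w.lt.ne, if_pos rfl, zero_sub, MvPolynomial.coeff_neg,
    MvPolynomial.coeff_monomial, if_pos rfl]

lemma coeff_Wvec_ne (w' w : RWord X) (hww : w' ≠ w) :
    MvPolynomial.coeff (expv X (w.a₁ :: w.rest)) ((Wvec k X w'.a₀ w'.a₁ w'.rest) w.a₀) = 0 := by
  rw [Wvec, Finsupp.sub_apply, MvPolynomial.coeff_sub]
  have h1 : MvPolynomial.coeff (expv X (w.a₁ :: w.rest))
      ((Finsupp.single w'.a₁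
        (MvPolynomial.monomial (expv X (w'.a₀ :: w'.rest)) (1:k))) w.a₀) = 0 := by
    rcases eq_or_ne w'.a₁ w.a₀ with h | h
    · rw [Finsupp.single_apply, if_pos h, MvPolynomial.coeff_monomial, if_neg]
      intro he
      exact key2 w' w h he
    · rw [Finsupp.single_apply, if_neg h, MvPolynomial.coeff_zero]
  have h2 : MvPolynomial.coeff (expv X (w.a₁ :: w.rest))
      ((Finsupp.single w'.a₀
        (MvPolynomial.monomial (expv X (w'.a₁ :: w'.rest)) (1:k))) w.a₀) = 0 := by
    rcases eq_or_ne w'.a₀ w.a₀ with h | h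
    · rw [Finsupp.single_apply, if_pos h, MvPolynomial.coeff_monomial, if_neg]
      intro he
      exact hww (key1 w' w h he)
    · rw [Finsupp.single_apply, if_neg h, MvPolynomial.coeff_zero]
  rw [h1, h2, sub_zero]

lemma indep : LinearIndependent k
    (Sum.elim (fun x : X => FreeMetabelianLieAlgebra.of k x)
      (fun w : RWord X => w.toLie k)) := by
  apply LinearIndependent.of_comp (φbar k X)
  have hcomp : (φbar k X) ∘ (Sum.elim (fun x : X => FreeMetabelianLieAlgebra.of k x)
        (fun w : RWord X => w.toLie k))
      = Sum.elim (fun x : X => gen k X x)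
          (fun w : RWord X => ((-1 : k)) ^ w.rest.length
            • pr k X (Wvec k X w.a₀ w.a₁ w.rest)) := by
    funext i
    cases i with
    | inl x => exact φbar_of x
    | inr w => exact φbar_toLie w
  rw [hcomp, linearIndependent_iff']
  intro s g hsum i hi
  cases i with
  | inl x =>
      have h := congrArg (fstAt k X x) hsum
      rw [map_sum, map_zero] at h
      rw [Finset.sum_eq_single_of_mem (Sum.inl x) hi] at h
      · rw [map_smul, Sum.elim_inl, fstAt_gen, if_pos rfl, smul_eq_mul, mul_one] at h
        exact h
      · intro j hj hne
        cases j with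
        | inl y =>
            rw [map_smul, Sum.elim_inl, fstAt_gen,
              if_neg (fun hyx => hne (by rw [hyx])), smul_zero]
        | inr w =>
            rw [map_smul, Sum.elim_inr, map_smul, fstAt_pr, smul_zero, smul_zero]
  | inr w =>
      have h := congrArg (coeffAt k X w.a₀ (expv X (w.a₁ :: w.rest))) hsum
      rw [map_sum, map_zero] at h
      rw [Finset.sum_eq_single_of_mem (Sum.inr w) hi] at h
      · rw [map_smul, Sum.elim_inr, map_smul, coeffAt_pr, coeff_Wvec_self] at h
        have hc : ((-1 : k)) ^ w.rest.length • (-1 : k) ≠ 0 := by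
          rw [smul_eq_mul]
          exact mul_ne_zero (pow_ne_zero _ (neg_ne_zero.mpr one_ne_zero))
            (neg_ne_zero.mpr one_ne_zero)
        exact (smul_eq_zero.mp h).resolve_right hc
      · intro j hj hne
        cases j with
        | inl y => rw [map_smul, Sum.elim_inl, coeffAt_gen, smul_zero]
        | inr w' =>
            rw [map_smul, Sum.elim_inr, map_smul, coeffAt_pr,
              coeff_Wvec_ne w' w (fun e => hne (by rw [e])), smul_zero, smul_zero]

end Indep

end FMB

/-- The images of the generators together with the images of the regular `R`-words form a
`k`-linear basis of the free metabelian Lie algebra `L₍₂₎(X)`. -/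
theorem freeMetabelian_basis (k : Type u) [Field k] (X : Type v) [LinearOrder X] :
    LinearIndependent k
        (Sum.elim (fun x : X => FreeMetabelianLieAlgebra.of k x)
          (fun w : RWord X => w.toLie k)) ∧
      Submodule.span k
          (Set.range (Sum.elim (fun x : X => FreeMetabelianLieAlgebra.of k x)
            (fun w : RWord X => w.toLie k))) = ⊤ := by
  exact ⟨FMB.indep, FMB.T_eq_top⟩
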